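/- Let S be a numerical semigroup with q = ⌈c/m⌉, ρ = qm−c, and S_j = S ∩ [jm−ρ,(j+1)m−ρ). If S_i + S_j = S_{i+j} for all i, j ≥ 1 with i + j ≤ q−1, then e(S)·|L(S)| ≥ c, i.e., S satisfies Wilf's conjecture. -/

import Mathlib

open Pointwise

namespace WilfAux

def sumn (E : Finset ℕ) : ℕ → Finset ℕ
  | 0 => {0}
  | k+1 => sumn E k + E

lemma mem_sumn_succ {E : Finset ℕ} {k x : ℕ} :
    x ∈ sumn E (k+1) ↔ ∃ y ∈ sumn E k, ∃ e ∈ E, y + e = x := by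
  rw [sumn, Finset.mem_add]

def cand (E : Finset ℕ) (k x : ℕ) : Finset ℕ :=
  E.filter (fun e => e ≤ x ∧ x - e ∈ sumn E k)

lemma mem_cand {E : Finset ℕ} {k x e : ℕ} :
    e ∈ cand E k x ↔ e ∈ E ∧ e ≤ x ∧ x - e ∈ sumn E k := by
  simp [cand]

lemma cand_nonempty {E : Finset ℕ} {k x : ℕ} (hx : x ∈ sumn E (k+1)) :
    (cand E k x).Nonempty := by
  obtain ⟨y, hy, e, he, hye⟩ := mem_sumn_succ.1 hx
  exact ⟨e, mem_cand.2 ⟨he, by omega, by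
    have : x - e = y := by omega
    rw [this]; exact hy⟩⟩

noncomputable def rep (E : Finset ℕ) : ℕ → ℕ → List ℕ
  | 0, _ => []
  | k+1, x =>
    if h : (cand E k x).Nonempty then
      (cand E k x).max' h :: rep E k (x - (cand E k x).max' h)
    else []

lemma rep_succ {E : Finset ℕ} {k x : ℕ} (h : (cand E k x).Nonempty) :
    rep E (k+1) x = (cand E k x).max' h :: rep E k (x - (cand E k x).max' h) := by
  rw [rep, dif_pos h]

lemma rep_spec {E : Finset ℕ} : ∀ k x, x ∈ sumn E k →
    (rep E k x).length = k ∧ (rep E k x).sum = x ∧ ∀ e ∈ rep E k x, e ∈ E := by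
  intro k
  induction k with
  | zero => intro x hx; simp [sumn] at hx; simp [rep, hx]
  | succ k ih =>
    intro x hx
    have h := cand_nonempty hx
    set e₁ := (cand E k x).max' h with he₁
    have hmem : e₁ ∈ cand E k x := Finset.max'_mem _ h
    rw [mem_cand] at hmem
    obtain ⟨hE, hle, hsub⟩ := hmem
    obtain ⟨hl, hs, hm⟩ := ih (x - e₁) hsub
    rw [rep_succ h, ← he₁]
    refine ⟨by simp [hl], by simp [hs]; omega, ?_⟩
    intro e he
    rcases List.mem_cons.1 he with h' | h'
    · rw [h']; exact hE
    · exact hm e h'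

lemma rep_delete {E : Finset ℕ} : ∀ (l₁ : List ℕ) (k x : ℕ), x ∈ sumn E (k+1) →
    ∀ d l₂, rep E (k+1) x = l₁ ++ d :: l₂ →
    d ∈ E ∧ d ≤ x ∧ (x - d) ∈ sumn E k ∧ rep E k (x - d) = l₁ ++ l₂ := by
  intro l₁
  induction l₁ with
  | nil =>
    intro k x hx d l₂ hrep
    have h := cand_nonempty hx
    rw [rep_succ h] at hrep
    simp only [List.nil_append] at hrep ⊢
    obtain ⟨hd, htail⟩ := List.cons_eq_cons.mp hrep
    have hmem : (cand E k x).max' h ∈ cand E k x := Finset.max'_mem _ h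
    rw [mem_cand] at hmem
    rw [hd] at hmem
    exact ⟨hmem.1, hmem.2.1, hmem.2.2, by rw [hd] at htail; exact htail⟩
  | cons e₁' l₁' ih =>
    intro k x hx d l₂ hrep
    have h := cand_nonempty hx
    set e₁ := (cand E k x).max' h with he₁def
    have hmeme₁ : e₁ ∈ cand E k x := Finset.max'_mem _ h
    rw [mem_cand] at hmeme₁
    obtain ⟨he₁E, he₁le, he₁sub⟩ := hmeme₁
    rw [rep_succ h] at hrep
    simp only [List.cons_append] at hrep
    have he₁' : e₁' = e₁ := (List.cons_eq_cons.mp hrep).1.symm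
    have htail : rep E k (x - e₁) = l₁' ++ d :: l₂ :=
      (List.cons_eq_cons.mp hrep).2
    -- need k = k'+1
    cases k with
    | zero =>
      exfalso
      have := rep_spec 0 (x - e₁) he₁sub
      rw [htail] at this
      simp at this
    | succ k' =>
      obtain ⟨hdE, hdle, hdsub, hdrep⟩ := ih k' (x - e₁) he₁sub d l₂ htail
      have hd_le_x : d ≤ x := by omega
      have harith : x - e₁ - d = x - d - e₁ := by omega
      -- x - d ∈ sumn E (k'+1)
      have hxd : x - d ∈ sumn E (k'+1) := by
        rw [mem_sumn_succ]
        refine ⟨x - e₁ - d, hdsub, e₁, he₁E, by omega⟩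
      refine ⟨hdE, hd_le_x, hxd, ?_⟩
      -- show max' of cand E k' (x-d) = e₁
      have hcand : (cand E k' (x - d)).Nonempty := cand_nonempty hxd
      have he₁cand : e₁ ∈ cand E k' (x - d) := by
        rw [mem_cand]
        refine ⟨he₁E, by omega, ?_⟩
        rw [harith] at hdsub; exact hdsub
      have hmax : (cand E k' (x - d)).max' hcand = e₁ := by
        apply le_antisymm
        · apply Finset.max'_le
          intro f hf
          rw [mem_cand] at hf
          obtain ⟨hfE, hfle, hfsub⟩ := hf
          -- x - f ∈ sumn E (k'+1): x - f = (x - d - f) + d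
          have : x - f ∈ sumn E (k'+1) := by
            rw [mem_sumn_succ]
            exact ⟨x - d - f, hfsub, d, hdE, by omega⟩
          have hfc : f ∈ cand E (k'+1) x := mem_cand.2 ⟨hfE, by omega, this⟩
          exact Finset.le_max' _ _ hfc
        · exact Finset.le_max' _ _ he₁cand
      rw [rep_succ hcand, hmax, ← harith, hdrep, he₁']
      simp

lemma sumn_add_mem {E : Finset ℕ} {i j y z : ℕ} (hy : y ∈ sumn E i) (hz : z ∈ sumn E j) :
    y + z ∈ sumn E (i + j) := by
  induction j generalizing z with
  | zero => simp [sumn] at hz; subst hz; simpa using hy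
  | succ j ih =>
    obtain ⟨z', hz', e, he, hze⟩ := mem_sumn_succ.1 hz
    have : y + z = (y + z') + e := by omega
    rw [this, show i + (j+1) = (i+j) + 1 by ring]
    exact mem_sumn_succ.2 ⟨y + z', ih hz', e, he, rfl⟩


lemma sum_count_eq_length {E : Finset ℕ} : ∀ (l : List ℕ), (∀ a ∈ l, a ∈ E) →
    ∑ e ∈ E, l.count e = l.length := by
  intro l
  induction l with
  | nil => simp
  | cons a t ih =>
    intro h
    have ha : a ∈ E := h a (by simp)
    have ht : ∀ b ∈ t, b ∈ E := fun b hb => h b (by simp [hb])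
    simp only [List.count_cons, List.length_cons]
    rw [Finset.sum_add_distrib, ih ht]
    congr 1
    have : (∑ x ∈ E, if (a == x) = true then 1 else 0) = ∑ x ∈ E, if a = x then 1 else 0 := by
      refine Finset.sum_congr rfl (fun x _ => by by_cases h : a = x <;> simp [h])
    rw [this, Finset.sum_ite_eq E a (fun _ => 1)]
    simp [ha]

lemma count_step {E : Finset ℕ} (k : ℕ) (e : ℕ) :
    ∑ x ∈ sumn E (k+1), (rep E (k+1) x).count e ≤
    ∑ y ∈ sumn E k, ((rep E k y).count e + 1) := by
  classical
  set X := (sumn E (k+1)).filter (fun x => 0 < (rep E (k+1) x).count e) with hX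
  have hkey : ∀ x ∈ X, e ≤ x ∧ x - e ∈ sumn E k ∧
      (rep E (k+1) x).count e = (rep E k (x - e)).count e + 1 := by
    intro x hx
    rw [hX, Finset.mem_filter] at hx
    obtain ⟨hxs, hcnt⟩ := hx
    have hmem : e ∈ rep E (k+1) x := List.count_pos_iff.mp hcnt
    obtain ⟨l₁, l₂, hsplit⟩ := List.append_of_mem hmem
    obtain ⟨heE, hele, hesub, herep⟩ := rep_delete l₁ k x hxs e l₂ hsplit
    refine ⟨hele, hesub, ?_⟩
    rw [hsplit, herep]
    simp [List.count_append, List.count_cons]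
    omega
  have hsum1 : ∑ x ∈ sumn E (k+1), (rep E (k+1) x).count e
      = ∑ x ∈ X, (rep E (k+1) x).count e := by
    rw [hX]
    exact (Finset.sum_filter_of_ne (fun x _ h => Nat.pos_of_ne_zero h)).symm
  have hsum2 : ∑ x ∈ X, (rep E (k+1) x).count e
      = ∑ x ∈ X, ((rep E k (x - e)).count e + 1) :=
    Finset.sum_congr rfl (fun x hx => (hkey x hx).2.2)
  have hinj : Set.InjOn (fun x => x - e) X := by
    intro x₁ h₁ x₂ h₂ heq
    have e₁ := (hkey x₁ h₁).1
    have e₂ := (hkey x₂ h₂).1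
    simp only at heq
    omega
  have hsum3 : ∑ x ∈ X, ((rep E k (x - e)).count e + 1)
      = ∑ y ∈ X.image (fun x => x - e), ((rep E k y).count e + 1) :=
    (Finset.sum_image (g := fun x => x - e) (f := fun y => (rep E k y).count e + 1)
      (fun x hx y hy h => hinj hx hy h)).symm
  have hsub : X.image (fun x => x - e) ⊆ sumn E k := by
    intro y hy
    obtain ⟨x, hx, rfl⟩ := Finset.mem_image.mp hy
    exact (hkey x hx).2.1
  rw [hsum1, hsum2, hsum3]
  exact Finset.sum_le_sum_of_subset hsub

lemma lemA {E : Finset ℕ} (k : ℕ) :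
    (k+1) * (sumn E (k+1)).card ≤ (k + E.card) * (sumn E k).card := by
  classical
  have hlen : ∀ j, ∀ x ∈ sumn E j, ∑ e ∈ E, (rep E j x).count e = j := by
    intro j x hx
    obtain ⟨hl, _, hm⟩ := rep_spec j x hx
    rw [sum_count_eq_length _ hm, hl]
  calc (k+1) * (sumn E (k+1)).card
      = ∑ x ∈ sumn E (k+1), (k+1) := by rw [Finset.sum_const, smul_eq_mul, mul_comm]
    _ = ∑ x ∈ sumn E (k+1), ∑ e ∈ E, (rep E (k+1) x).count e :=
        Finset.sum_congr rfl (fun x hx => (hlen (k+1) x hx).symm)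
    _ = ∑ e ∈ E, ∑ x ∈ sumn E (k+1), (rep E (k+1) x).count e := Finset.sum_comm
    _ ≤ ∑ e ∈ E, ∑ y ∈ sumn E k, ((rep E k y).count e + 1) :=
        Finset.sum_le_sum (fun e _ => count_step k e)
    _ = ∑ y ∈ sumn E k, ∑ e ∈ E, ((rep E k y).count e + 1) := Finset.sum_comm
    _ = ∑ y ∈ sumn E k, (k + E.card) := by
        refine Finset.sum_congr rfl (fun y hy => ?_)
        rw [Finset.sum_add_distrib, hlen k y hy]
        simp
    _ = (k + E.card) * (sumn E k).card := by rw [Finset.sum_const, smul_eq_mul, mul_comm]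

lemma lemB {E : Finset ℕ} : ∀ k, k * (sumn E k).card ≤
    E.card * ∑ j ∈ Finset.range k, (sumn E j).card := by
  intro k
  induction k with
  | zero => simp
  | succ k ih =>
    have h1 := lemA (E := E) k
    have h2 : (k + E.card) * (sumn E k).card
        = k * (sumn E k).card + E.card * (sumn E k).card := by ring
    rw [Finset.sum_range_succ, Nat.mul_add]
    omega

lemma sumn_one {E : Finset ℕ} : sumn E 1 = E := by
  ext x
  rw [mem_sumn_succ]
  constructor
  · rintro ⟨y, hy, e, he, rfl⟩
    simp only [sumn, Finset.mem_singleton] at hy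
    subst hy
    simpa using he
  · intro hx
    exact ⟨0, by simp [sumn], x, hx, by omega⟩

end WilfAux

open WilfAux in
/-- If `S_i + S_j = S_{i+j}` for all `i, j ≥ 1` with `i + j ≤ q − 1`, then `S`
satisfies Wilf's conjecture. -/
theorem wilf_true_grading (S : Set ℕ) (m c q ρ : ℕ)
    (hS0 : 0 ∈ S) (hSadd : ∀ a ∈ S, ∀ b ∈ S, a + b ∈ S)
    (hSfin : (Sᶜ : Set ℕ).Finite)
    (hm : m = sInf {n : ℕ | n ∈ S ∧ n ≠ 0})
    (hc : c = sSup (Sᶜ : Set ℕ) + 1)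
    (hq : c + ρ = q * m) (hρ : ρ < m)
    (Sj : ℕ → Set ℕ)
    (hSj : ∀ j, Sj j = S ∩ Set.Ico (j * m - ρ) ((j + 1) * m - ρ))
    (hgrade : ∀ i j, 1 ≤ i → 1 ≤ j → i + j ≤ q - 1 → Sj i + Sj j = Sj (i + j))
    (P L : Set ℕ)
    (hP : P = {x : ℕ | x ∈ S ∧ x ≠ 0 ∧
      ¬ ∃ y ∈ S, ∃ z ∈ S, y ≠ 0 ∧ z ≠ 0 ∧ x = y + z})
    (hL : L = S ∩ Set.Ico 0 c) :
    c ≤ P.ncard * L.ncard := by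
  classical
  -- basic facts
  have hSne : {n : ℕ | n ∈ S ∧ n ≠ 0}.Nonempty := by
    obtain ⟨N, hN⟩ := hSfin.bddAbove
    refine ⟨N + 1, ?_, by omega⟩
    by_contra hns
    exact absurd (hN hns) (by omega)
  have hmS : m ∈ S ∧ m ≠ 0 := hm ▸ Nat.sInf_mem hSne
  have hm1 : 1 ≤ m := Nat.pos_of_ne_zero hmS.2
  have hmle : ∀ s ∈ S, s ≠ 0 → m ≤ s := fun s hs hs0 => hm ▸ Nat.sInf_le ⟨hs, hs0⟩
  have hcS : ∀ n, c ≤ n → n ∈ S := by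
    intro n hn
    by_contra hns
    have := le_csSup hSfin.bddAbove (show n ∈ Sᶜ from hns)
    omega
  rcases Nat.eq_zero_or_pos c with hc0 | hc1
  · simp [hc0]
  have hq1 : 1 ≤ q := by
    rcases Nat.eq_zero_or_pos q with h | h
    · subst h; simp at hq; omega
    · exact h
  -- Finset versions of L and P
  set Lf : Finset ℕ := (Finset.range c).filter (· ∈ S) with hLf
  have hLcoe : L = ↑Lf := by
    rw [hL]; ext x
    simp [hLf, Set.mem_Ico, and_comm]
  have hPbound : ∀ x ∈ P, x < c + m := by
    intro x hx
    rw [hP] at hx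
    obtain ⟨hxS, hx0, hnd⟩ := hx
    by_contra hge
    exact hnd ⟨m, hmS.1, x - m, hcS (x - m) (by omega), hmS.2, by omega, by omega⟩
  set Pf : Finset ℕ := (Finset.range (c + m)).filter (· ∈ P) with hPf
  have hPcoe : P = ↑Pf := by
    ext x
    simp only [hPf, Finset.coe_filter, Finset.mem_range, Set.mem_setOf_eq]
    exact ⟨fun h => ⟨hPbound x h, h⟩, fun h => h.2⟩
  rw [hPcoe, hLcoe, Set.ncard_coe_finset, Set.ncard_coe_finset]
  have hL0 : 0 ∈ Lf := by simp [hLf, hS0, hc1]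
  have hL1 : 1 ≤ Lf.card := Finset.card_pos.mpr ⟨0, hL0⟩
  rcases Nat.lt_or_ge q 2 with hqlt | hq2
  · -- case q = 1
    have hqe : q = 1 := by omega
    subst hqe
    have hcm : c ≤ m := by omega
    have hBP : Finset.Ico c (c + m) ⊆ Pf := by
      intro x hx
      rw [Finset.mem_Ico] at hx
      simp only [hPf, Finset.mem_filter, Finset.mem_range]
      refine ⟨by omega, ?_⟩
      rw [hP]
      refine ⟨hcS x hx.1, by omega, ?_⟩
      rintro ⟨y, hy, z, hz, hy0, hz0, rfl⟩
      have := hmle y hy hy0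
      have := hmle z hz hz0
      omega
    have hPm : m ≤ Pf.card := by
      have := Finset.card_le_card hBP
      rwa [Nat.card_Ico, Nat.add_sub_cancel_left] at this
    calc c ≤ m * 1 := by omega
      _ ≤ Pf.card * Lf.card := Nat.mul_le_mul hPm hL1
  -- main case q ≥ 2
  set A : Finset ℕ := (Finset.Ico (m - ρ) (2 * m - ρ)).filter (· ∈ S) with hA
  have hAcoe : (↑A : Set ℕ) = Sj 1 := by
    rw [hSj 1]
    ext x
    simp only [hA, Finset.coe_filter, Finset.mem_Ico, Set.mem_setOf_eq,
      Set.mem_inter_iff, Set.mem_Ico]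
    constructor
    · rintro ⟨⟨h1, h2⟩, h3⟩; exact ⟨h3, by omega, by omega⟩
    · rintro ⟨h3, h1, h2⟩; exact ⟨⟨by omega, by omega⟩, h3⟩
  have hAS : ∀ x ∈ A, x ∈ S ∧ m ≤ x := by
    intro x hx
    rw [hA, Finset.mem_filter, Finset.mem_Ico] at hx
    exact ⟨hx.2, hmle x hx.2 (by omega)⟩
  have hsumnS : ∀ k, ∀ y ∈ sumn A k, k * m ≤ y ∧ (1 ≤ k → y ∈ S) := by
    intro k
    induction k with
    | zero => intro y hy; simp [sumn] at hy; simp [hy]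
    | succ k ih =>
      intro y hy
      obtain ⟨y', hy', e, he, hye⟩ := mem_sumn_succ.1 hy
      obtain ⟨hk, hkS⟩ := ih y' hy'
      obtain ⟨heS, hem⟩ := hAS e he
      have hmul : (k + 1) * m = k * m + m := by ring
      refine ⟨by omega, fun _ => ?_⟩
      rcases Nat.eq_zero_or_pos k with h | h
      · subst h; simp [sumn] at hy'; subst hy'; rw [← hye]; simpa using heS
      · exact hye ▸ hSadd y' (hkS h) e heS
  have hSjA : ∀ j, 1 ≤ j → j ≤ q - 1 → (↑(sumn A j) : Set ℕ) = Sj j := by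
    intro j
    induction j with
    | zero => omega
    | succ j ih =>
      intro _ hj
      rcases Nat.eq_zero_or_pos j with h | h
      · subst h; rw [sumn_one]; exact hAcoe
      · have hcoe : (↑(sumn A (j + 1)) : Set ℕ) = ↑(sumn A j) + ↑A := by
          rw [show sumn A (j+1) = sumn A j + A from rfl, Finset.coe_add]
        rw [hcoe, ih h (by omega), hAcoe, hgrade j 1 h (by omega) (by omega)]
  -- interval location
  have hLOC : ∀ x, m - ρ ≤ x → x < c → ∃ j, 1 ≤ j ∧ j ≤ q - 1 ∧
      j * m - ρ ≤ x ∧ x < (j + 1) * m - ρ := by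
    intro x hx1 hx2
    refine ⟨(x + ρ) / m, ?_⟩
    have hdm := Nat.div_add_mod (x + ρ) m
    have hmod : (x + ρ) % m < m := Nat.mod_lt _ hm1
    set j := (x + ρ) / m with hj
    obtain ⟨u, hu⟩ : ∃ u, u = m * j := ⟨_, rfl⟩
    have hj1 : 1 ≤ j := by
      rcases Nat.eq_zero_or_pos j with h | h
      · rw [h] at hdm; simp at hdm; omega
      · exact h
    have hjq : j < q := by
      have h1 : m * j < m * q := by
        have hqm : m * q = q * m := by ring
        omega
      exact Nat.lt_of_mul_lt_mul_left h1
    have he1 : (j + 1) * m = m * j + m := by ring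
    have he2 : j * m = m * j := by ring
    refine ⟨hj1, by omega, by omega, by omega⟩
  -- bounds for sumn elements
  have hSjbound : ∀ j, 1 ≤ j → j ≤ q - 1 → ∀ x ∈ sumn A j,
      x ∈ S ∧ j * m - ρ ≤ x ∧ x < (j + 1) * m - ρ ∧ x < c := by
    intro j hj1 hjq x hx
    have hxSj : x ∈ Sj j := by
      rw [← hSjA j hj1 hjq]; exact hx
    rw [hSj j] at hxSj
    obtain ⟨hxS, hxlo, hxhi⟩ := hxSj
    refine ⟨hxS, hxlo, hxhi, ?_⟩
    have h1 : (j + 1) * m ≤ q * m := Nat.mul_le_mul_right m (by omega)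
    obtain ⟨u, hu⟩ : ∃ u, u = (j + 1) * m := ⟨_, rfl⟩
    omega
  -- decomposition of L
  have hLdecomp : Lf = insert 0 ((Finset.Icc 1 (q - 1)).biUnion (fun j => sumn A j)) := by
    ext x
    simp only [hLf, Finset.mem_filter, Finset.mem_range, Finset.mem_insert,
      Finset.mem_biUnion, Finset.mem_Icc]
    constructor
    · rintro ⟨hxc, hxS⟩
      rcases Nat.eq_zero_or_pos x with h | h
      · exact Or.inl h
      · right
        have hxm : m ≤ x := hmle x hxS (by omega)
        obtain ⟨j, hj1, hjq, hjlo, hjhi⟩ := hLOC x (by omega) hxc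
        refine ⟨j, ⟨hj1, hjq⟩, ?_⟩
        have : x ∈ Sj j := by rw [hSj j]; exact ⟨hxS, hjlo, hjhi⟩
        rw [← hSjA j hj1 hjq] at this
        exact this
    · rintro (rfl | ⟨j, ⟨hj1, hjq⟩, hx⟩)
      · exact ⟨hc1, hS0⟩
      · obtain ⟨hxS, _, _, hxc⟩ := hSjbound j hj1 hjq x hx
        exact ⟨hxc, hxS⟩
  have hlcard : Lf.card = ∑ j ∈ Finset.range q, (sumn A j).card := by
    have hnot : (0 : ℕ) ∉ (Finset.Icc 1 (q - 1)).biUnion (fun j => sumn A j) := by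
      simp only [Finset.mem_biUnion, Finset.mem_Icc, not_exists]
      rintro j ⟨⟨hj1, hjq⟩, hj0⟩
      obtain ⟨hge, _⟩ := hsumnS j 0 hj0
      have : 1 * m ≤ j * m := Nat.mul_le_mul_right m hj1
      omega
    have hdisj : ∀ i ∈ Finset.Icc 1 (q - 1), ∀ j ∈ Finset.Icc 1 (q - 1), i ≠ j →
        Disjoint (sumn A i) (sumn A j) := by
      intro i hi j hj hij
      rw [Finset.mem_Icc] at hi hj
      rw [Finset.disjoint_left]
      intro x hxi hxj
      obtain ⟨_, hilo, hihi, _⟩ := hSjbound i hi.1 hi.2 x hxi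
      obtain ⟨_, hjlo, hjhi, _⟩ := hSjbound j hj.1 hj.2 x hxj
      rcases Nat.lt_or_ge i j with h | h
      · have : (i + 1) * m ≤ j * m := Nat.mul_le_mul_right m (by omega)
        obtain ⟨u, hu⟩ : ∃ u, u = (i + 1) * m := ⟨_, rfl⟩
        obtain ⟨v, hv⟩ : ∃ v, v = j * m := ⟨_, rfl⟩
        omega
      · have hji : j < i := by omega
        have : (j + 1) * m ≤ i * m := Nat.mul_le_mul_right m (by omega)
        obtain ⟨u, hu⟩ : ∃ u, u = (j + 1) * m := ⟨_, rfl⟩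
        obtain ⟨v, hv⟩ : ∃ v, v = i * m := ⟨_, rfl⟩
        omega
    have hrange : Finset.range q = insert 0 (Finset.Icc 1 (q - 1)) := by
      ext i
      simp only [Finset.mem_range, Finset.mem_insert, Finset.mem_Icc]
      omega
    rw [hLdecomp, Finset.card_insert_of_notMem hnot, Finset.card_biUnion hdisj,
      hrange, Finset.sum_insert (by simp)]
    simp only [sumn, Finset.card_singleton]
    omega
  -- multiples of m are in S
  have hmulS : ∀ j : ℕ, j * m ∈ S := by
    intro j
    induction j with
    | zero => simpa using hS0
    | succ j ih =>
      have : (j + 1) * m = j * m + m := by ring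
      rw [this]
      exact hSadd _ ih _ hmS.1
  -- q ≤ Lf.card
  have hlq : q ≤ Lf.card := by
    have := Finset.card_le_card_of_injOn (fun j => j * m) (s := Finset.range q) (t := Lf)
      (fun j hj => by
        simp only [Finset.mem_coe, Finset.mem_range] at hj
        simp only [Finset.mem_coe, hLf, Finset.mem_filter, Finset.mem_range]
        refine ⟨?_, hmulS j⟩
        have h1 : j * m ≤ (q - 1) * m := Nat.mul_le_mul_right m (by omega)
        have h2 : (q - 1) * m + m = q * m := by
          have : q - 1 + 1 = q := by omega
          calc (q - 1) * m + m = (q - 1 + 1) * m := by ring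
            _ = q * m := by rw [this]
        obtain ⟨u, hu⟩ : ∃ u, u = j * m := ⟨_, rfl⟩
        obtain ⟨v, hv⟩ : ∃ v, v = (q - 1) * m := ⟨_, rfl⟩
        omega)
      (fun x _ y _ h => Nat.eq_of_mul_eq_mul_right hm1 h)
    simpa using this
  -- decomposable elements of [c, c+m)
  set Df : Finset ℕ := (Finset.Ico c (c + m)).filter
    (fun x => ∃ y ∈ S, ∃ z ∈ S, y ≠ 0 ∧ z ≠ 0 ∧ x = y + z) with hDf
  have hDsub : Df ⊆ sumn A q := by
    intro x hx
    rw [hDf, Finset.mem_filter, Finset.mem_Ico] at hx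
    obtain ⟨⟨hxc, hxcm⟩, y, hyS, z, hzS, hy0, hz0, hxyz⟩ := hx
    have hym : m ≤ y := hmle y hyS hy0
    have hzm : m ≤ z := hmle z hzS hz0
    have hyc : y < c := by omega
    have hzc : z < c := by omega
    obtain ⟨i, hi1, hiq, hilo, hihi⟩ := hLOC y (by omega) hyc
    obtain ⟨j, hj1, hjq, hjlo, hjhi⟩ := hLOC z (by omega) hzc
    have hyA : y ∈ sumn A i := by
      have : y ∈ Sj i := by rw [hSj i]; exact ⟨hyS, hilo, hihi⟩
      rw [← hSjA i hi1 hiq] at this; exact this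
    have hzA : z ∈ sumn A j := by
      have : z ∈ Sj j := by rw [hSj j]; exact ⟨hzS, hjlo, hjhi⟩
      rw [← hSjA j hj1 hjq] at this; exact this
    have hxA : x ∈ sumn A (i + j) := hxyz ▸ sumn_add_mem hyA hzA
    set k := i + j with hk
    obtain ⟨hgem, _⟩ := hsumnS k x hxA
    have hkq : k ≤ q := by
      have h1 : k * m < (q + 1) * m := by
        have he : (q + 1) * m = q * m + m := by ring
        obtain ⟨u, hu⟩ : ∃ u, u = k * m := ⟨_, rfl⟩
        omega
      have := Nat.lt_of_mul_lt_mul_right h1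
      omega
    have hkeq : k = q := by
      by_contra hne
      have hkq1 : k ≤ q - 1 := by omega
      obtain ⟨_, _, _, hxck⟩ := hSjbound k (by omega) hkq1 x hxA
      omega
    rw [← hkeq]
    exact hxA
  have hDIco : Df ⊆ Finset.Ico c (c + m) := Finset.filter_subset _ _
  have htm : Df.card ≤ m := by
    have := Finset.card_le_card hDIco
    rwa [Nat.card_Ico, Nat.add_sub_cancel_left] at this
  -- B: primitive elements of [c, c+m)
  set Bf : Finset ℕ := (Finset.Ico c (c + m)).filter (· ∈ P) with hBf
  have hBeq : Bf = Finset.Ico c (c + m) \ Df := by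
    ext x
    simp only [hBf, hDf, Finset.mem_filter, Finset.mem_sdiff, Finset.mem_Ico]
    constructor
    · rintro ⟨hx, hxP⟩
      rw [hP] at hxP
      exact ⟨hx, fun h => hxP.2.2 h.2⟩
    · rintro ⟨hx, hnd⟩
      refine ⟨hx, ?_⟩
      rw [hP]
      exact ⟨hcS x hx.1, by omega, fun h => hnd ⟨hx, h⟩⟩
  have hBcard : Bf.card = m - Df.card := by
    rw [hBeq, Finset.card_sdiff_of_subset hDIco, Nat.card_Ico, Nat.add_sub_cancel_left]
  -- P = A ∪ B
  have h2mc : 2 * m - ρ ≤ c := by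
    have : 2 * m ≤ q * m := Nat.mul_le_mul_right m hq2
    omega
  have hA1 : sumn A 1 = A := sumn_one
  have hPsplit : Pf = A ∪ Bf := by
    ext x
    simp only [hPf, Finset.mem_filter, Finset.mem_range, Finset.mem_union]
    constructor
    · rintro ⟨hxcm, hxP⟩
      rw [hP] at hxP
      obtain ⟨hxS, hx0, hnd⟩ := hxP
      rcases Nat.lt_or_ge x c with hxc | hxc
      · left
        have hxm : m ≤ x := hmle x hxS hx0
        obtain ⟨j, hj1, hjq, hjlo, hjhi⟩ := hLOC x (by omega) hxc
        have hxSj : x ∈ sumn A j := by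
          have : x ∈ Sj j := by rw [hSj j]; exact ⟨hxS, hjlo, hjhi⟩
          rw [← hSjA j hj1 hjq] at this; exact this
        rcases Nat.eq_or_lt_of_le hj1 with hj | hj
        · rw [← hj, hA1] at hxSj; exact hxSj
        · exfalso
          obtain ⟨j', rfl⟩ : ∃ j', j = j' + 1 := ⟨j - 1, by omega⟩
          obtain ⟨y, hy, e, he, hye⟩ := mem_sumn_succ.1 hxSj
          obtain ⟨hym, hyS⟩ := hsumnS j' y hy
          obtain ⟨heS, hem⟩ := hAS e he
          have hj'1 : 1 ≤ j' := by omega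
          have h1m : 1 * m ≤ j' * m := Nat.mul_le_mul_right m hj'1
          have hyS' : y ∈ S := hyS hj'1
          have hy0' : y ≠ 0 := by omega
          have he0' : e ≠ 0 := by omega
          exact hnd ⟨y, hyS', e, heS, hy0', he0', hye.symm⟩
      · right
        rw [hBf, Finset.mem_filter, Finset.mem_Ico]
        exact ⟨⟨hxc, hxcm⟩, by rw [hP]; exact ⟨hxS, hx0, hnd⟩⟩
    · rintro (hxA | hxB)
      · obtain ⟨hxS, hxm⟩ := hAS x hxA
        rw [hA, Finset.mem_filter, Finset.mem_Ico] at hxA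
        refine ⟨by omega, ?_⟩
        rw [hP]
        refine ⟨hxS, by omega, ?_⟩
        rintro ⟨y, hy, z, hz, hy0, hz0, rfl⟩
        have := hmle y hy hy0
        have := hmle z hz hz0
        omega
      · rw [hBf, Finset.mem_filter, Finset.mem_Ico] at hxB
        exact ⟨by omega, hxB.2⟩
  have hABdisj : Disjoint A Bf := by
    rw [Finset.disjoint_left]
    intro x hxA hxB
    rw [hA, Finset.mem_filter, Finset.mem_Ico] at hxA
    rw [hBf, Finset.mem_filter, Finset.mem_Ico] at hxB
    omega
  have hpcard : Pf.card = A.card + Bf.card := by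
    rw [hPsplit, Finset.card_union_of_disjoint hABdisj]
  -- Macaulay-type bound
  have hmac : q * (sumn A q).card ≤ A.card * Lf.card := by
    rw [hlcard]
    exact lemB q
  have hqt : q * Df.card ≤ A.card * Lf.card :=
    le_trans (Nat.mul_le_mul_left q (Finset.card_le_card hDsub)) hmac
  -- final chain
  have hfinal : q * m ≤ Pf.card * Lf.card := by
    have hsplitm : q * m = q * Df.card + q * (m - Df.card) := by
      rw [← Nat.mul_add]
      congr 1
      omega
    calc q * m = q * Df.card + q * (m - Df.card) := hsplitm
      _ ≤ A.card * Lf.card + (m - Df.card) * Lf.card := by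
          refine Nat.add_le_add hqt ?_
          rw [mul_comm]
          exact Nat.mul_le_mul_left _ hlq
      _ = (A.card + (m - Df.card)) * Lf.card := by ring
      _ = Pf.card * Lf.card := by rw [hpcard, hBcard]
  omega
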